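/- For every integer n ≥ 1, the set {P ∈ ℚ̄³ : f^n(P) = P} of n-periodic points of f is finite. -/

import Mathlib

noncomputable section
open Polynomial

/-- The Hénon-like map over any commutative ring. -/
def hh {A : Type*} [CommRing A] (p : A × A) : A × A := (p.2, p.1 + p.2 - p.2 ^ 3)

lemma hh_iter_fst {A : Type*} [CommRing A] (p : A × A) (k : ℕ) :
    (hh^[k + 1] p).1 = (hh^[k] p).2 := by
  rw [Function.iterate_succ_apply']; rfl

lemma hh_iter_snd {A : Type*} [CommRing A] (p : A × A) (k : ℕ) :
    (hh^[k + 2] p).2 = (hh^[k] p).2 + (hh^[k+1] p).2 - ((hh^[k+1] p).2) ^ 3 := by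
  rw [show k + 2 = (k+1) + 1 by ring, Function.iterate_succ_apply' hh (k+1)]
  show (hh^[k+1] p).1 + _ - _ = _
  rw [hh_iter_fst]

/-- no periodic point of the complex Hénon map has second coordinate of absolute value > 2 -/
lemma escape (n : ℕ) (hn : 1 ≤ n) (q : ℂ × ℂ) (hq : hh^[n] q = q) :
    ‖q.2‖ ≤ 2 := by
  by_contra hbig
  push_neg at hbig
  set Y : ℕ → ℝ := fun k => ‖(hh^[k] q).2‖ with hY
  have hper : ∀ k, Y (k + n) = Y k := by
    intro k
    simp only [hY, Function.iterate_add_apply, hq]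
  -- max over [1, n]
  obtain ⟨k₀, hk₀mem, hk₀max⟩ :=
    (Finset.Icc 1 n).exists_max_image Y ⟨n, Finset.mem_Icc.2 ⟨hn, le_rfl⟩⟩
  set m := Y k₀ with hm
  have hbound : ∀ k, Y k ≤ m := by
    intro k
    rcases Nat.eq_zero_or_pos k with rfl | hk
    · have := hper 0; simp only [zero_add] at this
      rw [← this]; exact hk₀max n (Finset.mem_Icc.2 ⟨hn, le_rfl⟩)
    · -- write k = j + q*n with j ∈ [1,n]
      have key : ∀ t j, 1 ≤ j → j ≤ n → Y (j + t * n) ≤ m := by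
        intro t
        induction t with
        | zero => intro j h1 h2; simpa using hk₀max j (Finset.mem_Icc.2 ⟨h1, h2⟩)
        | succ t ih =>
          intro j h1 h2
          have : j + (t+1) * n = (j + t * n) + n := by ring
          rw [this, hper]; exact ih j h1 h2
      have hk' : k = (k - 1) % n + 1 + ((k-1)/n) * n := by
        have h := Nat.mod_add_div (k-1) n
        have : ((k-1)/n) * n = n * ((k-1)/n) := Nat.mul_comm _ _
        omega
      rw [hk']
      exact key _ _ (by omega) (by have := Nat.mod_lt (k-1) (show 0 < n by omega); omega)
  have hm2 : 2 < m := by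
    have := hper 0; simp only [zero_add] at this
    calc (2:ℝ) < Y 0 := hbig
    _ = Y n := this.symm
    _ ≤ m := hk₀max n (Finset.mem_Icc.2 ⟨hn, le_rfl⟩)
  -- k₀ ≥ 1, write k₀ = j + 1
  obtain ⟨h1, h2⟩ := Finset.mem_Icc.1 hk₀mem
  obtain ⟨j, rfl⟩ : ∃ j, k₀ = j + 1 := ⟨k₀ - 1, by omega⟩
  have hrec := hh_iter_snd q j
  have hineq : m ^ 3 - m - m ≤ Y (j + 2) := by
    have h3 : ‖((hh^[j+1] q).2) ^ 3‖ = m ^ 3 := by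
      rw [norm_pow]
    calc m ^ 3 - m - m ≤ ‖((hh^[j+1] q).2)^3‖ - Y (j+1) - Y j := by
          rw [h3]
          have hj := hbound j
          linarith
      _ ≤ ‖((hh^[j] q).2 + (hh^[j+1] q).2 - ((hh^[j+1] q).2)^3)‖ := by
          set u := ((hh^[j+1] q).2)^3
          set w := (hh^[j] q).2 + (hh^[j+1] q).2
          have t1 : ‖u‖ ≤ ‖w - u‖ + ‖w‖ := by
            have h := norm_add_le (u - w) w
            have h2 : ‖u - w‖ = ‖w - u‖ := by
              rw [show u - w = -(w - u) by ring, norm_neg]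
            rw [sub_add_cancel, h2] at h
            exact h
          have t2 : ‖w‖ ≤ Y j + Y (j+1) := norm_add_le _ _
          have : ‖w - u‖ = ‖((hh^[j] q).2 + (hh^[j+1] q).2 - ((hh^[j+1] q).2)^3)‖ := rfl
          linarith
      _ = Y (j + 2) := by rw [← hrec]
  have hle := hbound (j + 2)
  have h1' : m^3 - 3*m ≤ 0 := by linarith
  nlinarith [hm2, sq_nonneg m]

/-- ℚ[Y] -/
abbrev QY := Polynomial ℚ
/-- ℚ[Y][X] -/
abbrev QXY := Polynomial QY

/-- the iterates: hh^[k](x,y) = (PP k, PP (k+1)) -/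
def PP : ℕ → QXY
  | 0 => X
  | 1 => C Polynomial.X
  | (k+2) => PP k + PP (k+1) - (PP (k+1)) ^ 3

/-- evaluation hom ℚ[Y][X] → A at X = a, with coefficient hom χ -/
def ev {A : Type*} [CommRing A] (χ : QY →+* A) (a : A) : QXY →+* A :=
  eval₂RingHom χ a

lemma ev_X {A : Type*} [CommRing A] (χ : QY →+* A) (a : A) : ev χ a X = a := by
  simp [ev]

lemma ev_CY {A : Type*} [CommRing A] (χ : QY →+* A) (a : A) :
    ev χ a (C Polynomial.X) = χ Polynomial.X := by
  simp [ev]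

lemma hh_iter_eq_ev {A : Type*} [CommRing A] (χ : QY →+* A) (a : A) (k : ℕ) :
    hh^[k] (a, χ Polynomial.X) = (ev χ a (PP k), ev χ a (PP (k+1))) := by
  induction k with
  | zero => simp [PP, ev_X, ev_CY]
  | succ k ih =>
    rw [Function.iterate_succ_apply', ih]
    show (ev χ a (PP (k+1)), ev χ a (PP k) + ev χ a (PP (k+1)) - (ev χ a (PP (k+1)))^3) = _
    rw [show k + 1 + 1 = k + 2 from rfl, show PP (k+2) = PP k + PP (k+1) - (PP (k+1))^3 from rfl]
    simp [map_add, map_sub, map_pow]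

lemma PP_deg : ∀ n : ℕ, (PP (n+2)).natDegree = 3^n ∧ (PP (n+2)).leadingCoeff = (-1)^n
    ∧ (PP (n+1)).natDegree < 3^n := by
  intro n
  induction n with
  | zero =>
    have e1 : PP 2 = X + C Polynomial.X - (C Polynomial.X)^3 := rfl
    have e2 : (X + C Polynomial.X - (C Polynomial.X)^3 : QXY)
        = X + C (Polynomial.X - Polynomial.X^3) := by
      simp only [map_sub, map_pow]; ring
    have hd : (X + C (Polynomial.X - Polynomial.X^3) : QXY).natDegree = 1 := by
      compute_degree!
    refine ⟨?_, ?_, ?_⟩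
    · rw [e1, e2, hd]; norm_num
    · rw [e1, e2, leadingCoeff, hd]
      simp [← map_pow, Polynomial.coeff_C]
    · show (C Polynomial.X : QXY).natDegree < 1
      simp
  | succ n ih =>
    obtain ⟨hdeg, hlead, hlt⟩ := ih
    have hP2ne : PP (n+2) ≠ 0 := by
      intro h
      rw [h] at hlead
      simp at hlead
      have : ((-1 : QY))^n ≠ 0 := by
        apply pow_ne_zero; simp
      exact this hlead.symm
    have hcube_deg : ((PP (n+2))^3).natDegree = 3^(n+1) := by
      rw [Polynomial.natDegree_pow, hdeg]; ring
    have hcube_lead : ((PP (n+2))^3).leadingCoeff = ((-1)^n)^3 := by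
      rw [Polynomial.leadingCoeff_pow, hlead]
    have h31 : (3:ℕ)^n < 3^(n+1) := Nat.pow_lt_pow_right (by omega) (by omega)
    have hsum_deg : (PP (n+1) + PP (n+2)).natDegree < 3^(n+1) := by
      have h2 : (PP (n+2)).natDegree < 3^(n+1) := by rw [hdeg]; exact h31
      calc (PP (n+1) + PP (n+2)).natDegree ≤ max (PP (n+1)).natDegree (PP (n+2)).natDegree :=
            Polynomial.natDegree_add_le _ _
      _ < 3^(n+1) := by omega
    have key : PP (n+3) = -((PP (n+2))^3) + (PP (n+1) + PP (n+2)) := by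
      show PP (n+1) + PP (n+2) - (PP (n+2))^3 = _
      ring
    have hneg_deg : (-((PP (n+2))^3)).natDegree = 3^(n+1) := by
      rw [Polynomial.natDegree_neg]; exact hcube_deg
    have hlt' : (PP (n+1) + PP (n+2)).natDegree < (-((PP (n+2))^3)).natDegree := by
      rw [hneg_deg]; exact hsum_deg
    have hdeg' : (PP (n+3)).natDegree = 3^(n+1) := by
      rw [key, Polynomial.natDegree_add_eq_left_of_natDegree_lt hlt', hneg_deg]
    refine ⟨hdeg', ?_, ?_⟩
    · rw [key, Polynomial.leadingCoeff_add_of_degree_lt' (Polynomial.degree_lt_degree hlt')]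
      rw [Polynomial.leadingCoeff_neg, hcube_lead, ← pow_mul]
      have : (-1 : QY)^(n*3) = (-1)^n := by
        rcases Nat.even_or_odd n with he | ho
        · rw [he.neg_one_pow, (by omega : n*3 = n + n + n), pow_add, pow_add, he.neg_one_pow]
          ring
        · rw [ho.neg_one_pow, (by omega : n*3 = n + n + n), pow_add, pow_add, ho.neg_one_pow]
          ring
      rw [this]; ring
    · rw [show n+1+1 = n+2 from rfl, hdeg]; exact h31


/-- a transcendental (over ℚ) complex number of absolute value > 2 -/
noncomputable def tc : ℂ := ((3 + liouvilleNumber 3 : ℝ) : ℂ)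

lemma liouville_nonneg : (0:ℝ) ≤ liouvilleNumber 3 := by
  unfold liouvilleNumber
  apply tsum_nonneg
  intro i
  positivity

lemma tc_abs : 2 < ‖tc‖ := by
  have := liouville_nonneg
  rw [show tc = ((3 + liouvilleNumber 3 : ℝ) : ℂ) from rfl, Complex.norm_real, Real.norm_eq_abs, abs_of_nonneg (by linarith)]
  linarith

lemma transcendental_tc : Transcendental ℚ tc := by
  have h1 : Transcendental ℤ (liouvilleNumber 3) := transcendental_liouvilleNumber (by norm_num)
  have h2 : Transcendental ℚ (liouvilleNumber 3) := by
    intro h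
    exact h1 ((IsFractionRing.isAlgebraic_iff ℤ ℚ ℝ).2 h)
  have h3 : Transcendental ℚ ((3 + liouvilleNumber 3 : ℝ)) := by
    rintro ⟨p, hp, hroot⟩
    apply h2
    refine ⟨p.comp (Polynomial.X + Polynomial.C 3), ?_, ?_⟩
    · intro h
      by_cases hdp : p.natDegree = 0
      · obtain ⟨c, rfl⟩ : ∃ c, p = Polynomial.C c := ⟨p.coeff 0, p.eq_C_of_natDegree_eq_zero hdp⟩
        rw [Polynomial.C_comp] at h
        exact hp h
      · have hd : (p.comp (Polynomial.X + Polynomial.C 3)).natDegree = p.natDegree := by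
          rw [Polynomial.natDegree_comp]
          simp
        rw [h] at hd
        simp at hd
        exact hdp hd.symm
    · rw [Polynomial.aeval_comp]
      have : (Polynomial.aeval (liouvilleNumber 3)) (Polynomial.X + Polynomial.C (3:ℚ))
          = (3 + liouvilleNumber 3 : ℝ) := by
        simp [add_comm]
      rw [this]
      exact hroot
  intro h
  apply h3
  obtain ⟨p, hp, hroot⟩ := h
  refine ⟨p, hp, ?_⟩
  have : Polynomial.aeval tc p
      = ((Complex.ofRealAm.restrictScalars ℚ) : ℝ →ₐ[ℚ] ℂ) (Polynomial.aeval (3 + liouvilleNumber 3 : ℝ) p) := by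
    rw [← Polynomial.aeval_algHom_apply]
    rfl
  rw [this] at hroot
  have hinj : Function.Injective ((Complex.ofRealAm.restrictScalars ℚ) : ℝ →ₐ[ℚ] ℂ) :=
    Complex.ofReal_injective
  have := hinj (a₂ := 0) (by simpa using hroot)
  exact this


/-- A fixed algebraic closure of `ℚ`. -/
noncomputable def Qbar : Type := AlgebraicClosure ℚ

noncomputable instance : Field Qbar := inferInstanceAs (Field (AlgebraicClosure ℚ))
noncomputable instance : Algebra ℚ Qbar := inferInstanceAs (Algebra ℚ (AlgebraicClosure ℚ))
noncomputable instance : CharZero Qbar := inferInstanceAs (CharZero (AlgebraicClosure ℚ))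

/-- The automorphism `f(x,y,z) = (y, x + y - y³, 2z - y)` on `ℚ̄³`. -/
noncomputable def fA (P : Qbar × Qbar × Qbar) : Qbar × Qbar × Qbar :=
  (P.2.1, P.1 + P.2.1 - P.2.1 ^ 3, 2 * P.2.2 - P.2.1)

def gP (m : ℕ) : QXY := PP (m+3) - X
def kP (m : ℕ) : QXY := PP (m+4) - C Polynomial.X

lemma three_le (m : ℕ) : 3 ≤ 3^(m+1) := by
  calc 3 = 3^1 := rfl
  _ ≤ 3^(m+1) := Nat.pow_le_pow_right (by omega) (by omega)

lemma gP_natDegree (m : ℕ) : (gP m).natDegree = 3^(m+1) := by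
  obtain ⟨hd, _, _⟩ := PP_deg (m+1)
  have hX : (X : QXY).natDegree < (PP (m+3)).natDegree := by
    rw [Polynomial.natDegree_X, hd]; have := three_le m; omega
  rw [gP, Polynomial.natDegree_sub_eq_left_of_natDegree_lt hX, hd]

lemma gP_lead (m : ℕ) : (gP m).leadingCoeff = (-1)^(m+1) := by
  obtain ⟨hd, hl, _⟩ := PP_deg (m+1)
  have hX : (X : QXY).natDegree < (PP (m+3)).natDegree := by
    rw [Polynomial.natDegree_X, hd]; have := three_le m; omega
  rw [gP, Polynomial.leadingCoeff_sub_of_degree_lt (Polynomial.degree_lt_degree hX), hl]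

lemma kP_natDegree (m : ℕ) : (kP m).natDegree = 3^(m+2) := by
  obtain ⟨hd, _, _⟩ := PP_deg (m+2)
  have hX : (C Polynomial.X : QXY).natDegree < (PP (m+4)).natDegree := by
    rw [Polynomial.natDegree_C, hd]; have := three_le (m+1); omega
  rw [kP, Polynomial.natDegree_sub_eq_left_of_natDegree_lt hX]
  exact hd

lemma kP_lead (m : ℕ) : (kP m).leadingCoeff = (-1)^(m+2) := by
  obtain ⟨hd, hl, _⟩ := PP_deg (m+2)
  have hX : (C Polynomial.X : QXY).natDegree < (PP (m+4)).natDegree := by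
    rw [Polynomial.natDegree_C, hd]; have := three_le (m+1); omega
  rw [kP, Polynomial.leadingCoeff_sub_of_degree_lt (Polynomial.degree_lt_degree hX), hl]

lemma gP_ne (m : ℕ) : gP m ≠ 0 := by
  intro h
  have := gP_lead m
  rw [h] at this
  simp only [Polynomial.leadingCoeff_zero] at this
  exact pow_ne_zero (m+1) (neg_ne_zero.2 (one_ne_zero)) this.symm

/-- fixed points of `hh^[m+3]` are common zeros of `gP m` and `kP m`, and conversely. -/
lemma fix_iff_ev {A : Type*} [CommRing A] (χ : QY →+* A) (a : A) (m : ℕ) :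
    hh^[m+3] (a, χ Polynomial.X) = (a, χ Polynomial.X)
      ↔ (ev χ a (gP m) = 0 ∧ ev χ a (kP m) = 0) := by
  rw [hh_iter_eq_ev χ a (m+3), Prod.ext_iff]
  show _ ↔ (ev χ a (PP (m+3) - X) = 0 ∧ ev χ a (PP (m+4) - C Polynomial.X) = 0)
  rw [map_sub, map_sub, ev_X, ev_CY, sub_eq_zero, sub_eq_zero]

lemma hh_map {A B : Type*} [CommRing A] [CommRing B] (ρ : A →+* B) (p : A × A) :
    hh (ρ p.1, ρ p.2) = (ρ (hh p).1, ρ (hh p).2) := by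
  simp [hh, map_add, map_sub, map_pow]

lemma hh_iter_map {A B : Type*} [CommRing A] [CommRing B] (ρ : A →+* B) (p : A × A) (k : ℕ) :
    hh^[k] (ρ p.1, ρ p.2) = (ρ ((hh^[k] p)).1, ρ ((hh^[k] p)).2) := by
  induction k with
  | zero => rfl
  | succ k ih =>
    rw [Function.iterate_succ_apply', Function.iterate_succ_apply', ih, hh_map]

/-- coefficient evaluation ℚ[Y] → Qbar at Y = b -/
def cy (b : Qbar) : QY →+* Qbar := eval₂RingHom (algebraMap ℚ Qbar) b

lemma cy_X (b : Qbar) : cy b Polynomial.X = b := by simp [cy]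

theorem fixh_finite (m : ℕ) : {p : Qbar × Qbar | hh^[m+3] p = p}.Finite := by
  by_contra hinf
  set S := {p : Qbar × Qbar | hh^[m+3] p = p} with hS
  -- pointwise evaluations
  have hev : ∀ p ∈ S, ev (cy p.2) p.1 (gP m) = 0 ∧ ev (cy p.2) p.1 (kP m) = 0 := by
    intro p hp
    have := (fix_iff_ev (cy p.2) p.1 m).1 (by rw [cy_X]; simpa [hS] using hp)
    exact this
  -- the set of second coordinates is infinite
  have hY2 : (Prod.snd '' S).Infinite := by
    intro hfin
    apply hinf
    have hsub : S ⊆ ⋃ b ∈ Prod.snd '' S, {p : Qbar × Qbar | p ∈ S ∧ p.2 = b} := by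
      intro p hp
      exact Set.mem_biUnion ⟨p, hp, rfl⟩ ⟨hp, rfl⟩
    refine Set.Finite.subset (Set.Finite.biUnion hfin ?_) hsub
    intro b _
    have hGne : (gP m).map (cy b) ≠ 0 := by
      intro h
      have hc : ((gP m).map (cy b)).coeff (3^(m+1)) = cy b ((gP m).leadingCoeff) := by
        rw [Polynomial.coeff_map]
        congr 1
        rw [← gP_natDegree m]
        rfl
      rw [h, gP_lead] at hc
      simp only [Polynomial.coeff_zero] at hc
      have : ((-1 : Qbar))^(m+1) ≠ 0 := pow_ne_zero _ (neg_ne_zero.2 one_ne_zero)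
      apply this
      rw [← hc.symm]
      simp [map_pow, map_neg, map_one]
    have hroots : {x : Qbar | ((gP m).map (cy b)).IsRoot x}.Finite :=
      Polynomial.finite_setOf_isRoot hGne
    have : {p : Qbar × Qbar | p ∈ S ∧ p.2 = b}
        ⊆ (fun x => (x, b)) '' {x : Qbar | ((gP m).map (cy b)).IsRoot x} := by
      rintro p ⟨hp, rfl⟩
      refine ⟨p.1, ?_, rfl⟩
      show Polynomial.eval p.1 ((gP m).map (cy p.2)) = 0
      rw [← Polynomial.eval₂_eq_eval_map]
      exact (hev p hp).1
    exact Set.Finite.subset (hroots.image _) this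
  -- the coprimality contradiction
  classical
  set F := FractionRing QY
  set α : QY →+* F := algebraMap QY F with hα
  have hαinj : Function.Injective α := IsFractionRing.injective QY F
  have hsmul : ∀ (r : QY) (w : Polynomial F), r • w = C (α r) * w := by
    intro r w
    ext i
    rw [Polynomial.coeff_smul, Polynomial.coeff_C_mul, Algebra.smul_def]
  have hnc : ¬ IsCoprime ((gP m).map α) ((kP m).map α) := by
    rintro ⟨u, v, huv⟩
    obtain ⟨s, hs⟩ := IsLocalization.integerNormalization_map_to_map (nonZeroDivisors QY) u
    obtain ⟨t, ht⟩ := IsLocalization.integerNormalization_map_to_map (nonZeroDivisors QY) v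
    set A0 := IsLocalization.integerNormalization (nonZeroDivisors QY) u with hA0
    set B0 := IsLocalization.integerNormalization (nonZeroDivisors QY) v with hB0
    have hstne : ((s:QY) * (t:QY)) ≠ 0 :=
      mul_ne_zero (nonZeroDivisors.coe_ne_zero s) (nonZeroDivisors.coe_ne_zero t)
    have hmapeq : (A0 * C (t:QY) * gP m + B0 * C (s:QY) * kP m).map α
        = (C ((s:QY)*(t:QY))).map α := by
      rw [Polynomial.map_add, Polynomial.map_mul, Polynomial.map_mul, Polynomial.map_mul,
        Polynomial.map_mul, hs, ht, Polynomial.map_C, Polynomial.map_C, Polynomial.map_C,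
        hsmul, hsmul, map_mul α, Polynomial.C_mul]
      linear_combination (C (α (s:QY)) * C (α (t:QY))) * huv
    have hQeq : A0 * C (t:QY) * gP m + B0 * C (s:QY) * kP m = C ((s:QY)*(t:QY)) :=
      Polynomial.map_injective α hαinj hmapeq
    have hstmapne : ((s:QY)*(t:QY)).map (algebraMap ℚ Qbar) ≠ 0 := by
      intro h
      exact hstne (Polynomial.map_injective _
        (algebraMap ℚ Qbar).injective (by rw [h, Polynomial.map_zero]))
    have hsubroots : Prod.snd '' S ⊆
        {b : Qbar | (((s:QY)*(t:QY)).map (algebraMap ℚ Qbar)).IsRoot b} := by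
      rintro b ⟨p, hp, rfl⟩
      obtain ⟨h1, h2⟩ := hev p hp
      have := congrArg (ev (cy p.2) p.1) hQeq
      rw [map_add, map_mul, map_mul, map_mul, map_mul, h1, h2] at this
      simp only [mul_zero, add_zero, zero_add] at this
      show Polynomial.eval p.2 (((s:QY)*(t:QY)).map (algebraMap ℚ Qbar)) = 0
      rw [← Polynomial.eval₂_eq_eval_map]
      have hevC : ev (cy p.2) p.1 (C ((s:QY)*(t:QY))) = cy p.2 ((s:QY)*(t:QY)) := by
        simp [ev]
      rw [hevC] at this
      exact this.symm
    exact hY2 ((Polynomial.finite_setOf_isRoot hstmapne).subset hsubroots)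
  -- take a common factor and a common root over the algebraic closure of F
  set gF := (gP m).map α with hgF
  set kF := (kP m).map α with hkF
  set δ := EuclideanDomain.gcd gF kF with hδ
  have hδu : ¬ IsUnit δ := fun h => hnc ((EuclideanDomain.gcd_isUnit_iff).1 h)
  have hgFne : gF ≠ 0 := fun h => gP_ne m (Polynomial.map_injective α hαinj
    (by rw [← hgF, h, Polynomial.map_zero]))
  have hδ0 : δ ≠ 0 := by
    intro h
    exact hgFne ((EuclideanDomain.gcd_eq_zero_iff).1 h).1
  have hδdeg : δ.degree ≠ 0 := by
    intro h
    exact hδu (Polynomial.isUnit_iff_degree_eq_zero.2 h)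
  set Ω := AlgebraicClosure F with hΩ
  set β : F →+* Ω := algebraMap F Ω with hβ
  have hδΩdeg : (δ.map β).degree ≠ 0 := by
    rw [Polynomial.degree_map]; exact hδdeg
  obtain ⟨ξ, hξ⟩ := IsAlgClosed.exists_root (k := Ω) (δ.map β) hδΩdeg
  have hgz : Polynomial.eval ξ (gF.map β) = 0 := by
    obtain ⟨c, hc⟩ := EuclideanDomain.gcd_dvd_left gF kF
    rw [← hδ] at hc
    rw [hc, Polynomial.map_mul, Polynomial.eval_mul]
    rw [Polynomial.IsRoot] at hξ
    rw [hξ, zero_mul]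
  have hkz : Polynomial.eval ξ (kF.map β) = 0 := by
    obtain ⟨c, hc⟩ := EuclideanDomain.gcd_dvd_right gF kF
    rw [← hδ] at hc
    rw [hc, Polynomial.map_mul, Polynomial.eval_mul]
    rw [Polynomial.IsRoot] at hξ
    rw [hξ, zero_mul]
  set χΩ : QY →+* Ω := β.comp α with hχΩ
  have hgz' : ev χΩ ξ (gP m) = 0 := by
    show Polynomial.eval₂ χΩ ξ (gP m) = 0
    rw [Polynomial.eval₂_eq_eval_map, hχΩ, ← Polynomial.map_map]
    exact hgz
  have hkz' : ev χΩ ξ (kP m) = 0 := by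
    show Polynomial.eval₂ χΩ ξ (kP m) = 0
    rw [Polynomial.eval₂_eq_eval_map, hχΩ, ← Polynomial.map_map]
    exact hkz
  have hperΩ : hh^[m+3] (ξ, χΩ Polynomial.X) = (ξ, χΩ Polynomial.X) :=
    (fix_iff_ev χΩ ξ m).2 ⟨hgz', hkz'⟩
  -- embed into ℂ
  set χ₀ : QY →+* ℂ := eval₂RingHom (algebraMap ℚ ℂ) tc with hχ₀
  have hχ₀inj : Function.Injective χ₀ := by
    have htc := transcendental_tc
    rw [transcendental_iff_injective] at htc
    have : (χ₀ : QY → ℂ) = (Polynomial.aeval tc : QY →ₐ[ℚ] ℂ) := by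
      funext p
      simp [hχ₀, Polynomial.aeval_def]
    rw [this]
    exact htc
  letI algFC : Algebra F ℂ := (IsFractionRing.lift (A := QY) (g := χ₀) hχ₀inj).toAlgebra
  haveI : FaithfulSMul F Ω :=
    (faithfulSMul_iff_algebraMap_injective F Ω).2 (algebraMap F Ω).injective
  haveI : FaithfulSMul F ℂ :=
    (faithfulSMul_iff_algebraMap_injective F ℂ).2 (algebraMap F ℂ).injective
  set j : Ω →ₐ[F] ℂ := IsAlgClosed.lift with hj
  have hperC : hh^[m+3] ((j : Ω →+* ℂ) ξ, (j : Ω →+* ℂ) (χΩ Polynomial.X))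
      = ((j : Ω →+* ℂ) ξ, (j : Ω →+* ℂ) (χΩ Polynomial.X)) := by
    have := hh_iter_map (j : Ω →+* ℂ) (ξ, χΩ Polynomial.X) (m+3)
    rw [hperΩ] at this
    exact this
  have hjy : (j : Ω →+* ℂ) (χΩ Polynomial.X) = tc := by
    have h1 : χΩ Polynomial.X = algebraMap F Ω (algebraMap QY F Polynomial.X) := rfl
    rw [h1]
    have h2 : j (algebraMap F Ω (algebraMap QY F Polynomial.X))
        = algebraMap F ℂ (algebraMap QY F Polynomial.X) := j.commutes _
    have h3 : algebraMap F ℂ (algebraMap QY F Polynomial.X) = χ₀ Polynomial.X := by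
      show (IsFractionRing.lift (A := QY) (g := χ₀) hχ₀inj) (algebraMap QY F Polynomial.X)
        = χ₀ Polynomial.X
      exact IsFractionRing.lift_algebraMap hχ₀inj _
    show j _ = tc
    rw [h2, h3, hχ₀]
    simp
  have := escape (m+3) (by omega) ((j : Ω →+* ℂ) ξ, (j : Ω →+* ℂ) (χΩ Polynomial.X)) hperC
  rw [hjy] at this
  simp only [] at this
  have := tc_abs
  linarith [escape (m+3) (by omega) ((j : Ω →+* ℂ) ξ, tc) (by rw [← hjy]; exact hperC)]

lemma fa_proj (P : Qbar × Qbar × Qbar) (k : ℕ) :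
    ((fA^[k] P).1, (fA^[k] P).2.1) = hh^[k] (P.1, P.2.1) := by
  induction k with
  | zero => rfl
  | succ k ih =>
    rw [Function.iterate_succ_apply', Function.iterate_succ_apply', ← ih]
    rfl

lemma fa_zdiff (P Q : Qbar × Qbar × Qbar) (h1 : P.1 = Q.1) (h2 : P.2.1 = Q.2.1) (k : ℕ) :
    (fA^[k] P).1 = (fA^[k] Q).1 ∧ (fA^[k] P).2.1 = (fA^[k] Q).2.1 ∧
      (fA^[k] P).2.2 - (fA^[k] Q).2.2 = 2^k * (P.2.2 - Q.2.2) := by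
  induction k with
  | zero => exact ⟨h1, h2, by simp⟩
  | succ k ih =>
    obtain ⟨i1, i2, i3⟩ := ih
    rw [Function.iterate_succ_apply', Function.iterate_succ_apply']
    refine ⟨by simp [fA, i2], by simp [fA, i1, i2], ?_⟩
    show 2 * (fA^[k] P).2.2 - (fA^[k] P).2.1 - (2 * (fA^[k] Q).2.2 - (fA^[k] Q).2.1)
      = 2^(k+1) * (P.2.2 - Q.2.2)
    rw [i2]
    have : (2:Qbar)^(k+1) = 2 * 2^k := by ring
    rw [this]
    linear_combination 2 * i3

/-- For every `n ≥ 1`, the set of `n`-periodic points of `f` in `ℚ̄³` is finite. -/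
theorem stmt1 (n : ℕ) (hn : 1 ≤ n) :
    {P : Qbar × Qbar × Qbar | fA^[n] P = P}.Finite := by
  obtain ⟨k, rfl⟩ : ∃ k, n = k + 1 := ⟨n-1, by omega⟩
  have hsub : {P : Qbar × Qbar × Qbar | fA^[k+1] P = P}
      ⊆ {P : Qbar × Qbar × Qbar | fA^[3*k+3] P = P} := by
    intro P hP
    show fA^[3*k+3] P = P
    rw [show 3*k+3 = (k+1)*3 by ring, Function.iterate_mul]
    exact Function.iterate_fixed hP 3
  refine Set.Finite.subset ?_ hsub
  have hfin2 := fixh_finite (3*k)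
  apply Set.Finite.of_finite_image (f := fun P : Qbar × Qbar × Qbar => (P.1, P.2.1))
  · refine Set.Finite.subset hfin2 ?_
    rintro q ⟨P, hP, rfl⟩
    show hh^[3*k+3] (P.1, P.2.1) = (P.1, P.2.1)
    rw [← fa_proj]
    rw [show fA^[3*k+3] P = P from hP]
  · rintro P hP Q hQ hPQ
    have hPQ' : (P.1, P.2.1) = (Q.1, Q.2.1) := hPQ
    have h1 : P.1 = Q.1 := (Prod.ext_iff.1 hPQ').1
    have h2 : P.2.1 = Q.2.1 := (Prod.ext_iff.1 hPQ').2
    obtain ⟨_, _, i3⟩ := fa_zdiff P Q h1 h2 (3*k+3)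
    rw [show fA^[3*k+3] P = P from hP, show fA^[3*k+3] Q = Q from hQ] at i3
    have hpow : (2:Qbar)^(3*k+3) ≠ 1 := by
      intro h
      have : ((2^(3*k+3) : ℕ) : Qbar) = ((1:ℕ) : Qbar) := by push_cast; rw [h]
      have := Nat.cast_injective (R := Qbar) this
      have h2' : 2 ≤ 2^(3*k+3) := Nat.one_lt_two_pow_iff.2 (by omega)
      omega
    have hz : P.2.2 = Q.2.2 := by
      by_contra hne
      have hd : P.2.2 - Q.2.2 ≠ 0 := sub_ne_zero.2 hne
      field_simp at i3
      exact hpow i3.symm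
    ext
    · exact h1
    · exact h2
    · exact hz
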